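/- Let k ≥ 2 and i ≥ 2k+3. Then no bipartite graph contains a k-dense set of size i. -/
import Mathlib


open SimpleGraph

/-- A set `S` of vertices is `k`-sparse in `G` if every vertex of `S` has at most `k`
neighbors inside `S`. -/
def KSparse {V : Type*} (G : SimpleGraph V) (k : ℕ) (S : Set V) : Prop :=
  ∀ v ∈ S, ({u ∈ S | G.Adj v u}).ncard ≤ k

/-- A set is `k`-dense in `G` if it is `k`-sparse in the complement of `G`. -/
def KDense {V : Type*} (G : SimpleGraph V) (k : ℕ) (S : Set V) : Prop :=
  KSparse Gᶜ k S

/-- `G` has a `k`-dense set of size `i`. -/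
def HasKDense {V : Type*} (G : SimpleGraph V) (k i : ℕ) : Prop :=
  ∃ D : Set V, D.ncard = i ∧ KDense G k D

/-- `G` has a `k`-sparse set of size `j`. -/
def HasKSparse {V : Type*} (G : SimpleGraph V) (k j : ℕ) : Prop :=
  ∃ S : Set V, S.ncard = j ∧ KSparse G k S

/-- A cactus: every edge lies on at most one cycle, i.e. any two cycles sharing
an edge have the same edge set. -/
def IsCactus {V : Type*} (G : SimpleGraph V) : Prop :=
  ∀ (u v : V) (c₁ : G.Walk u u) (c₂ : G.Walk v v), c₁.IsCycle → c₂.IsCycle →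
    (∃ e, e ∈ c₁.edges ∧ e ∈ c₂.edges) → (∀ e, e ∈ c₁.edges ↔ e ∈ c₂.edges)

/-- A split graph: the vertices partition into a clique and an independent set. -/
def IsSplit {V : Type*} (G : SimpleGraph V) : Prop :=
  ∃ K : Set V, G.IsClique K ∧ Gᶜ.IsClique Kᶜ

/-- A cograph: no induced path on four vertices. -/
def IsCograph {V : Type*} (G : SimpleGraph V) : Prop :=
  ¬ ∃ f : Fin 4 ↪ V, ∀ a b : Fin 4, G.Adj (f a) (f b) ↔ (SimpleGraph.pathGraph 4).Adj a b

theorem stmt15 {V : Type*} [Fintype V] (G : SimpleGraph V) (k i : ℕ)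
    (hk : 2 ≤ k) (hi : 2 * k + 3 ≤ i) (hbip : G.Colorable 2) :
    ¬ HasKDense G k i := by
  rintro ⟨D, hD, hdense⟩
  have hDfin : D.Finite := Set.toFinite D
  -- every vertex of D has many neighbors in D
  have key : ∀ v ∈ D, i ≤ ({u ∈ D | G.Adj v u}).ncard + k + 1 := by
    intro v hv
    have hsub : D ⊆ {u ∈ D | G.Adj v u} ∪ {u ∈ D | Gᶜ.Adj v u} ∪ {v} := by
      intro u hu
      by_cases huv : u = v
      · exact Or.inr (by simp [huv])
      · by_cases hadj : G.Adj v u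
        · exact Or.inl (Or.inl ⟨hu, hadj⟩)
        · exact Or.inl (Or.inr ⟨hu, by simp [SimpleGraph.compl_adj, hadj, Ne.symm huv]⟩)
    have h1 : D.ncard ≤ ({u ∈ D | G.Adj v u} ∪ {u ∈ D | Gᶜ.Adj v u} ∪ {v}).ncard :=
      Set.ncard_le_ncard hsub (((hDfin.subset (fun u hu => hu.1)).union
        (hDfin.subset (fun u hu => hu.1))).union (Set.finite_singleton v))
    have h2 : ({u ∈ D | G.Adj v u} ∪ {u ∈ D | Gᶜ.Adj v u} ∪ {v}).ncard ≤
        ({u ∈ D | G.Adj v u}).ncard + ({u ∈ D | Gᶜ.Adj v u}).ncard + 1 := by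
      calc ({u ∈ D | G.Adj v u} ∪ {u ∈ D | Gᶜ.Adj v u} ∪ {v}).ncard
          ≤ ({u ∈ D | G.Adj v u} ∪ {u ∈ D | Gᶜ.Adj v u}).ncard + ({v} : Set V).ncard :=
            Set.ncard_union_le _ _
        _ ≤ ({u ∈ D | G.Adj v u}).ncard + ({u ∈ D | Gᶜ.Adj v u}).ncard + 1 := by
            have := Set.ncard_union_le {u ∈ D | G.Adj v u} {u ∈ D | Gᶜ.Adj v u}
            simp only [Set.ncard_singleton]
            omega
    have h3 := hdense v hv
    omega
  -- D is nonempty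
  have hDne : D.Nonempty := by
    rw [← Set.ncard_pos hDfin] at *
    omega
  obtain ⟨v, hv⟩ := hDne
  -- v has a neighbor u in D
  have hvN : 1 ≤ ({u ∈ D | G.Adj v u}).ncard := by have := key v hv; omega
  obtain ⟨u, hu⟩ : ({u ∈ D | G.Adj v u}).Nonempty := by
    rw [← Set.ncard_pos (hDfin.subset (fun x hx => hx.1))]; omega
  obtain ⟨huD, hvu⟩ := hu
  -- common neighbor
  have hunion : ({w ∈ D | G.Adj v w} ∪ {w ∈ D | G.Adj u w}).ncard ≤ i := by
    rw [← hD]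
    exact Set.ncard_le_ncard (fun x hx => hx.elim (fun h => h.1) (fun h => h.1)) hDfin
  have hinter := Set.ncard_inter_add_ncard_union {w ∈ D | G.Adj v w} {w ∈ D | G.Adj u w}
    (hDfin.subset (fun x hx => hx.1)) (hDfin.subset (fun x hx => hx.1))
  have h1 := key v hv
  have h2 := key u huD
  have : 1 ≤ ({w ∈ D | G.Adj v w} ∩ {w ∈ D | G.Adj u w}).ncard := by omega
  obtain ⟨w, hw⟩ : ({w ∈ D | G.Adj v w} ∩ {w ∈ D | G.Adj u w}).Nonempty := by
    rw [← Set.ncard_pos ((hDfin.subset (fun x hx => hx.1)).inter_of_left _)]; omega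
  obtain ⟨⟨-, hvw⟩, -, huw⟩ := hw
  -- triangle contradicts 2-coloring
  obtain ⟨c⟩ := hbip
  have e1 := c.valid hvu
  have e2 := c.valid hvw
  have e3 := c.valid huw
  have : ∀ a b : Fin 2, a ≠ b → a.val + b.val = 1 := by decide
  have f1 := this _ _ e1
  have f2 := this _ _ e2
  have f3 := this _ _ e3
  omega
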